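/- Let Σ be a finite set with quiescent state q, r ≥ 1, N = (a_1,…,a_r) a strictly increasing sequence of integers, and δ : Σ^r → ℂ^Σ a local transition function with δ(q,…,q) equal to the indicator of q and ‖δ(w)‖ > 0 for all w. Define δ'(w) = δ(w)/‖δ(w)‖. If the time evolution operator U_A associated with δ preserves the ℓ² norm (equivalently, every column U_A(·,c) has unit norm), then the time evolution operator U_{A'} associated with δ' equals U_A. -/

import Mathlib

/-- Renormalizing the local transition function of a well-formed LQCA does not
change the time evolution operator: if every column of `U_A` has unit norm,
then the operator induced by `δ'(w) = δ(w)/‖δ(w)‖` equals `U_A`. -/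
theorem renormalized_rule_same_evolution {S : Type*} [Fintype S] [DecidableEq S]
    (q : S) {r : ℕ} (hr : 1 ≤ r) (N : Fin r → ℤ) (hN : StrictMono N)
    (δ : (Fin r → S) → EuclideanSpace ℂ S)
    (hq : ∀ x, δ (fun _ => q) x = if x = q then 1 else 0)
    (hpos : ∀ w, 0 < ‖δ w‖)
    (hnorm : ∀ c : {c : ℤ → S // {i | c i ≠ q}.Finite},
        (∑' d : {c : ℤ → S // {i | c i ≠ q}.Finite},
            ‖∏ᶠ i : ℤ, δ (fun j => c.1 (i + N j)) (d.1 i)‖ ^ 2) = 1) :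
    ∀ d c : {c : ℤ → S // {i | c i ≠ q}.Finite},
      (∏ᶠ i : ℤ, ((‖δ (fun j => c.1 (i + N j))‖ : ℂ)⁻¹ •
          δ (fun j => c.1 (i + N j))) (d.1 i))
        = ∏ᶠ i : ℤ, δ (fun j => c.1 (i + N j)) (d.1 i) := by
  classical
  intro d c
  set f : ℤ → EuclideanSpace ℂ S := fun i => δ (fun j => c.1 (i + N j)) with hf
  -- the set of cells whose window is not all-quiescent is finite
  have hTfin : {i : ℤ | (fun j => c.1 (i + N j)) ≠ fun _ => q}.Finite := by
    have h1 : ∀ j : Fin r, ((fun i : ℤ => i + N j) ⁻¹' {i | c.1 i ≠ q}).Finite := by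
      intro j
      exact Set.Finite.preimage (Set.injOn_of_injective (add_left_injective (N j))) c.2
    refine (Set.finite_iUnion h1).subset ?_
    intro i hi
    simp only [Set.mem_setOf_eq] at hi
    have : ∃ j, c.1 (i + N j) ≠ q := by
      by_contra h
      push_neg at h
      exact hi (funext h)
    obtain ⟨j, hj⟩ := this
    exact Set.mem_iUnion.2 ⟨j, hj⟩
  set K : Finset ℤ := hTfin.toFinset with hK
  have hKq : ∀ i ∉ K, (fun j => c.1 (i + N j)) = fun _ => q := by
    intro i hi
    by_contra h
    exact hi (hTfin.mem_toFinset.2 h)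
  -- norm of the quiescent column is 1
  have hnq : ‖δ (fun _ : Fin r => q)‖ = 1 := by
    rw [EuclideanSpace.norm_eq]
    have : ∀ x : S, ‖δ (fun _ => q) x‖ ^ 2 = if x = q then 1 else 0 := by
      intro x
      rw [hq]
      split <;> simp
    rw [Finset.sum_congr rfl fun x _ => this x]
    simp
  have hfq : ∀ i ∉ K, f i = δ (fun _ => q) := by
    intro i hi; rw [hf]; simp only []; rw [hKq i hi]
  -- mulSupport finiteness for any configuration
  have hsupp : ∀ e : {c : ℤ → S // {i | c i ≠ q}.Finite},
      (Function.mulSupport fun i => f i (e.1 i)).Finite := by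
    intro e
    refine (hTfin.union e.2).subset ?_
    intro i hi
    by_contra h
    simp only [Set.mem_union, Set.mem_setOf_eq, not_or, not_not] at h
    have h1 : f i = δ (fun _ => q) := by rw [hf]; simp only []; rw [h.1]
    have : f i (e.1 i) = 1 := by rw [h1, hq, if_pos h.2]
    exact hi this
  -- the key: product of norms over K is 1
  have hprodnorm : ∏ i ∈ K, ‖f i‖ = 1 := by
    have hc := hnorm c
    -- the embedding of local patterns into configurations
    set ev : ((↥K) → S) → {c : ℤ → S // {i | c i ≠ q}.Finite} := fun v =>
      ⟨fun i => if h : i ∈ K then v ⟨i, h⟩ else q, by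
        refine K.finite_toSet.subset ?_
        intro i hi
        by_contra h
        have hm : i ∉ K := fun hmm => h hmm
        simp only [Set.mem_setOf_eq, dif_neg hm] at hi
        exact hi rfl⟩ with hev
    have hev_inj : Function.Injective ev := by
      intro v w hvw
      funext i
      have := congrArg (fun e => e.1 i.1) hvw
      simpa [hev, dif_pos i.2] using this
    have hts : (∑' e : {c : ℤ → S // {i | c i ≠ q}.Finite},
        ‖∏ᶠ i : ℤ, f i (e.1 i)‖ ^ 2)
        = ∑ v : (↥K) → S, ‖∏ᶠ i : ℤ, f i ((ev v).1 i)‖ ^ 2 := by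
      rw [tsum_eq_sum (s := Finset.univ.image ev), Finset.sum_image
        (fun a _ b _ h => hev_inj h)]
      intro e he
      have : ∃ i ∉ K, e.1 i ≠ q := by
        by_contra h
        push_neg at h
        apply he
        refine Finset.mem_image.2 ⟨fun i => e.1 i.1, Finset.mem_univ _, ?_⟩
        apply Subtype.ext
        funext i
        by_cases hi : i ∈ K
        · simp [hev, dif_pos hi, hi]
        · simp [hev, dif_neg hi, (h i hi).symm]
      obtain ⟨i₀, hi₀, hei₀⟩ := this
      have h0 : f i₀ (e.1 i₀) = 0 := by
        rw [hfq i₀ hi₀, hq, if_neg hei₀]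
      rw [finprod_eq_zero _ i₀ h0 (hsupp e)]
      simp
    have hterm : ∀ v : (↥K) → S,
        ‖∏ᶠ i : ℤ, f i ((ev v).1 i)‖ ^ 2 = ∏ i : ↥K, ‖f i.1 (v i)‖ ^ 2 := by
      intro v
      have hsub : (Function.mulSupport fun i => f i ((ev v).1 i)) ⊆ ↑K := by
        intro i hi
        by_contra h
        have hm : i ∉ K := fun hmm => h hmm
        have h1 : (ev v).1 i = q := by simp [hev, dif_neg hm]
        have : f i ((ev v).1 i) = 1 := by
          rw [h1, hfq i h, hq, if_pos rfl]
        exact hi this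
      rw [finprod_eq_prod_of_mulSupport_subset _ hsub, ← Finset.prod_attach K
        (fun i => f i ((ev v).1 i))]
      have : ∀ i : ↥K, f i.1 ((ev v).1 i.1) = f i.1 (v i) := by
        intro i
        congr 1
        simp [hev, dif_pos i.2]
      rw [Finset.prod_congr rfl fun i _ => this i]
      rw [norm_prod, ← Finset.prod_pow]
      rfl
    rw [hts, Finset.sum_congr rfl fun v _ => hterm v] at hc
    have hinter := Finset.prod_univ_sum (fun _ : ↥K => (Finset.univ : Finset S))
      (fun i s => ‖f i.1 s‖ ^ 2)
    rw [Fintype.piFinset_univ] at hinter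
    rw [← hinter] at hc
    have hcol : ∀ i : ↥K, (∑ s : S, ‖f i.1 s‖ ^ 2) = ‖f i.1‖ ^ 2 := by
      intro i
      rw [EuclideanSpace.norm_eq, Real.sq_sqrt]
      exact Finset.sum_nonneg fun s _ => sq_nonneg _
    rw [Finset.prod_congr rfl fun i _ => hcol i, Finset.prod_pow] at hc
    have hnn : (0:ℝ) ≤ ∏ i : ↥K, ‖f i.1‖ :=
      Finset.prod_nonneg fun i _ => norm_nonneg _
    have h1 : ∏ i : ↥K, ‖f i.1‖ = 1 := by nlinarith
    rw [← Finset.prod_coe_sort K (fun i => ‖f i‖)]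
    exact h1
  -- now the main computation
  have hgoal1 : ∀ i : ℤ, ((‖f i‖ : ℂ)⁻¹ • f i) (d.1 i)
      = (‖f i‖ : ℂ)⁻¹ * f i (d.1 i) := fun i => rfl
  have hgsupp : (Function.mulSupport fun i => ((‖f i‖ : ℂ)⁻¹)).Finite := by
    refine K.finite_toSet.subset ?_
    intro i hi
    by_contra h
    have hm : i ∉ K := fun hmm => h hmm
    have h1 : ‖f i‖ = 1 := by rw [hfq i hm, hnq]
    apply hi
    show ((‖f i‖ : ℂ))⁻¹ = 1
    rw [h1]
    simp
  have hgK : (Function.mulSupport fun i => ((‖f i‖ : ℂ)⁻¹)) ⊆ ↑K := by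
    intro i hi
    by_contra h
    have hm : i ∉ K := fun hmm => h hmm
    have h1 : ‖f i‖ = 1 := by rw [hfq i hm, hnq]
    apply hi
    show ((‖f i‖ : ℂ))⁻¹ = 1
    rw [h1]
    simp
  calc (∏ᶠ i : ℤ, ((‖f i‖ : ℂ)⁻¹ • f i) (d.1 i))
      = ∏ᶠ i : ℤ, ((‖f i‖ : ℂ)⁻¹ * f i (d.1 i)) := by
        exact finprod_congr hgoal1
    _ = (∏ᶠ i : ℤ, (‖f i‖ : ℂ)⁻¹) * ∏ᶠ i : ℤ, f i (d.1 i) :=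
        finprod_mul_distrib hgsupp (hsupp d)
    _ = ∏ᶠ i : ℤ, f i (d.1 i) := by
        rw [finprod_eq_prod_of_mulSupport_subset _ hgK]
        have : (∏ i ∈ K, (‖f i‖ : ℂ)⁻¹) = ((∏ i ∈ K, ‖f i‖ : ℝ) : ℂ)⁻¹ := by
          push_cast
          rw [← Finset.prod_inv_distrib]
        rw [this, hprodnorm]
        simp
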